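/- Let G be a connected simple graph on n ≥ 6 vertices, let c₁c₂ be a non-edge of G, and suppose every vertex of G other than c₁ and c₂ has degree exactly n-2. Then for every non-edge ab of G with {a,b} ≠ {c₁,c₂}, the graph G + ab contains a path on at least n vertices (i.e., a Hamilton path) whose endpoints are c₁ and c₂ and which contains the edge ab, except possibly when {d_G(c₁), d_G(c₂)} = {1, n-3}. -/

import Mathlib

open SimpleGraph

variable {V : Type*}

/-- `x 1, …, x m` is a path in `G` (1-indexed): injective on `[1, m]`, with consecutive
vertices adjacent. -/
def IsIndexedPath (G : SimpleGraph V) (x : ℕ → V) (m : ℕ) : Prop :=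
  (∀ i j, 1 ≤ i → i ≤ m → 1 ≤ j → j ≤ m → x i = x j → i = j) ∧
  ∀ i, 1 ≤ i → i < m → G.Adj (x i) (x (i + 1))

/-- The vertex set of the indexed path `x 1, …, x m`. -/
def pathVerts (x : ℕ → V) (m : ℕ) : Set V := {v | ∃ i, 1 ≤ i ∧ i ≤ m ∧ x i = v}

/-- `N_P(v)`: the neighbours of `v` among the vertices of the path. -/
def pathNbrs (G : SimpleGraph V) (x : ℕ → V) (m : ℕ) (v : V) : Set V :=
  {u | u ∈ pathVerts x m ∧ G.Adj v u}

/-- `N_P⁻(x₁)`: immediate predecessors on `P` of the path-neighbours of `x₁`. -/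
def predNbrs (G : SimpleGraph V) (x : ℕ → V) (m : ℕ) : Set V :=
  {v | ∃ i, 2 ≤ i ∧ i ≤ m ∧ G.Adj (x 1) (x i) ∧ v = x (i - 1)}

/-- `N_P⁺(x_m)`: immediate successors on `P` of the path-neighbours of `x_m`. -/
def succNbrs (G : SimpleGraph V) (x : ℕ → V) (m : ℕ) : Set V :=
  {v | ∃ i, 1 ≤ i ∧ i < m ∧ G.Adj (x m) (x i) ∧ v = x (i + 1)}

/-- `G` contains no cycle of length at least `k`, i.e. `c(G) < k`. -/
def NoCycleGE (G : SimpleGraph V) (k : ℕ) : Prop :=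
  ∀ (v : V) (w : G.Walk v v), w.IsCycle → w.length < k

/-- `G` contains a cycle of length at least `L`. -/
def HasCycleGE (G : SimpleGraph V) (L : ℕ) : Prop :=
  ∃ (v : V) (w : G.Walk v v), w.IsCycle ∧ L ≤ w.length

/-- `G` is 2-connected: at least 3 vertices and deleting any single vertex leaves a
connected graph. -/
def TwoConnected (G : SimpleGraph V) [Fintype V] : Prop :=
  3 ≤ Fintype.card V ∧ ∀ v : V, (G.induce {u | u ≠ v}).Connected

/-- The vertex set of the `α`-disintegration `H(G, α)` of `G`: the largest vertex set on
which the induced subgraph has minimum degree at least `α + 1`. -/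
noncomputable def disint (G : SimpleGraph V) (α : ℕ) : Set V :=
  ⋃₀ {S : Set V | ∀ v ∈ S, α + 1 ≤ {u | u ∈ S ∧ G.Adj v u}.ncard}

/-- `N_s(G)`: the number of `s`-cliques of `G`. -/
noncomputable def cliqueCount (G : SimpleGraph V) (s : ℕ) : ℕ :=
  {S : Finset V | G.IsNClique s S}.ncard

/-- `h_s(n, k, a) = C(k - a, s) + (n - k + a) · C(a, s - 1)`. -/
def hval (n k a s : ℕ) : ℕ :=
  Nat.choose (k - a) s + (n - k + a) * Nat.choose a (s - 1)

/-- The graph `H(n, k, a)` on `Fin n`: the first `a` vertices form the set `A`, the next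
`k - 2a` vertices form `C`, and the remaining `n - k + a` vertices form `B`; `A ∪ C` is a
clique and every vertex of `A` is joined to every vertex of `B`. -/
def Hgraph (n k a : ℕ) : SimpleGraph (Fin n) :=
  SimpleGraph.fromRel fun i j =>
    (i.val < a ∧ k - a ≤ j.val) ∨ (i.val < k - a ∧ j.val < k - a)

/-- `G` is isomorphic to a subgraph of `H`. -/
def IsSubgraphOf {W : Type*} (G : SimpleGraph V) (H : SimpleGraph W) : Prop :=
  ∃ f : V → W, Function.Injective f ∧ ∀ a b, G.Adj a b → H.Adj (f a) (f b)

/-- Every connected component of `H` is a star: there is an assignment of a "center" to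
each vertex such that every edge joins the common center of its endpoints to a leaf. -/
def IsStarForest (H : SimpleGraph V) : Prop :=
  ∃ f : V → V, ∀ a b, H.Adj a b → (f a = a ∧ f b = a) ∨ (f a = b ∧ f b = b)

/-- `(i, j)` is a crossing pair of the indexed path `x 1, …, x m`. -/
def CrossPair (G : SimpleGraph V) (x : ℕ → V) (m i j : ℕ) : Prop :=
  1 ≤ i ∧ i < j ∧ j ≤ m ∧ G.Adj (x m) (x i) ∧ G.Adj (x 1) (x j)

/-- `(i, j)` is a minimal crossing pair of the indexed path `x 1, …, x m`. -/
def MinCrossPair (G : SimpleGraph V) (x : ℕ → V) (m i j : ℕ) : Prop :=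
  CrossPair G x m i j ∧
    ∀ h, i < h → h < j → ¬G.Adj (x 1) (x h) ∧ ¬G.Adj (x m) (x h)

/-- One application of the successor operation along the path to a set of vertices. -/
def succStep (x : ℕ → V) (m : ℕ) (S : Set V) : Set V :=
  {v | ∃ i, 1 ≤ i ∧ i < m ∧ x i ∈ S ∧ v = x (i + 1)}

/-- `N_P^{+i}(x_m)`: the `i`-fold iterated successor set of `N_P(x_m)` along the path. -/
def iterNbrSucc (G : SimpleGraph V) (x : ℕ → V) (m i : ℕ) : Set V :=
  (succStep x m)^[i] (pathNbrs G x m (x m))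

section Aux

open Classical in
private lemma master13 (H : SimpleGraph V) (S : Finset V) :
    ∀ (x y : V), x ≠ y → x ∉ S → y ∉ S → S.Nonempty →
    (∀ v ∈ S, ∀ w z : V, v ≠ w → v ≠ z → ¬H.Adj v w → ¬H.Adj v z → w = z) →
    (∃ v ∈ S, H.Adj x v) → (∃ v ∈ S, H.Adj y v) →
    (S.card = 2 → ∀ u ∈ S, ∀ v ∈ S, u ≠ v → H.Adj u v) →
    ∃ l : List V, l.Nodup ∧ (∀ v, v ∈ l ↔ v ∈ S) ∧
      List.Chain' H.Adj (x :: (l ++ [y])) := by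
  induction S using Finset.strongInductionOn with
  | _ S IH =>
  intro x y hxy hxS hyS hSne h1 h2 h3 h4
  classical
  by_cases hcard : S.card = 1
  · obtain ⟨v, hv⟩ := Finset.card_eq_one.mp hcard
    subst hv
    obtain ⟨w, hw, hxw⟩ := h2
    obtain ⟨w', hw', hyw'⟩ := h3
    simp only [Finset.mem_singleton] at hw hw'
    subst hw
    rw [hw'] at hyw'
    refine ⟨[w], by simp, by simp, ?_⟩
    simp [List.Chain', List.isChain_cons_cons, hxw, hyw'.symm]
  · have hcard2 : 2 ≤ S.card := by
      rcases hSne with ⟨v, hv⟩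
      have := Finset.card_pos.mpr ⟨v, hv⟩
      omega
    by_cases hpair : ∃ v ∈ S, ∃ u ∈ S, v ≠ u ∧ ¬H.Adj v u
    · obtain ⟨v, hvS, u, huS, hvu, hadj⟩ := hpair
      have hcard3 : 3 ≤ S.card := by
        rcases Nat.lt_or_ge S.card 3 with h | h
        · exfalso
          have : S.card = 2 := by omega
          exact hadj (h4 this v hvS u huS hvu)
        · exact h
      have hxv : H.Adj x v := by
        by_contra hxv
        have := h1 v hvS u x hvu (fun h => hxS (h ▸ hvS)) hadj
          (fun h => hxv (h.symm))
        exact hxS (this ▸ huS)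
      have hyu : H.Adj y u := by
        by_contra hyu
        have := h1 u huS v y (Ne.symm hvu) (fun h => hyS (h ▸ huS))
          (fun h => hadj h.symm) (fun h => hyu h.symm)
        exact hyS (this ▸ hvS)
      have hex3 : ∃ w ∈ S, w ≠ v ∧ w ≠ u := by
        by_contra hno
        push_neg at hno
        have : S ⊆ {v, u} := by
          intro w hw
          rcases Classical.em (w = v) with h | h
          · simp [h]
          · simp [hno w hw h]
        have hle2 : ({v, u} : Finset V).card ≤ 2 :=
          (Finset.card_insert_le _ _).trans (by simp)
        have := (Finset.card_le_card this).trans hle2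
        omega
      obtain ⟨w, hwS, hwv, hwu⟩ := hex3
      have hvw : H.Adj v w := by
        by_contra hvw
        exact hwu (h1 v hvS w u (Ne.symm hwv) hvu (fun h => hvw h) hadj)
      set S' := S.erase v with hS'
      have hsub : S' ⊂ S := Finset.erase_ssubset hvS
      have hcardS' : S'.card = S.card - 1 := Finset.card_erase_of_mem hvS
      have h4' : S'.card = 2 → ∀ p ∈ S', ∀ q ∈ S', p ≠ q → H.Adj p q := by
        intro hc2 p hp q hq hpq
        by_contra hnadj
        have hpS := Finset.mem_of_mem_erase hp
        have hqS := Finset.mem_of_mem_erase hq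
        have hpv := (Finset.mem_erase.mp hp).1
        have hqv := (Finset.mem_erase.mp hq).1
        rcases Classical.em (p = u) with h | h
        · subst h
          have := h1 p hpS v q hpv hpq (fun h' => hadj h'.symm) hnadj
          exact hqv this.symm
        · rcases Classical.em (q = u) with h' | h'
          · subst h'
            have := h1 q hqS v p hqv (Ne.symm hpq)
              (fun h'' => hadj h''.symm) (fun h'' => hnadj h''.symm)
            exact hpv this.symm
          · have hsub3 : ({p, q, u} : Finset V) ⊆ S' := by
              intro z hz
              simp only [Finset.mem_insert, Finset.mem_singleton] at hz
              rcases hz with rfl | rfl | rfl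
              · exact hp
              · exact hq
              · exact Finset.mem_erase.mpr ⟨Ne.symm hvu, huS⟩
            have h3' : ({p, q, u} : Finset V).card = 3 := by
              rw [Finset.card_insert_of_notMem (by simp [hpq, h]),
                Finset.card_insert_of_notMem (by simp [h']), Finset.card_singleton]
            have := Finset.card_le_card hsub3
            omega
      obtain ⟨l, hlnd, hlmem, hlch⟩ := IH S' hsub v y
        (fun h => hyS (h ▸ hvS))
        (Finset.notMem_erase _ _)
        (fun h => hyS (Finset.mem_of_mem_erase h))
        ⟨u, Finset.mem_erase.mpr ⟨Ne.symm hvu, huS⟩⟩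
        (fun z hz => h1 z (Finset.mem_of_mem_erase hz))
        ⟨w, Finset.mem_erase.mpr ⟨hwv, hwS⟩, hvw⟩
        ⟨u, Finset.mem_erase.mpr ⟨Ne.symm hvu, huS⟩, hyu⟩
        h4'
      refine ⟨v :: l, ?_, ?_, ?_⟩
      · refine List.nodup_cons.mpr ⟨?_, hlnd⟩
        intro hvl
        exact Finset.notMem_erase v S ((hlmem v).mp hvl)
      · intro z
        rw [List.mem_cons, hlmem z, hS', Finset.mem_erase]
        constructor
        · rintro (rfl | ⟨_, h⟩)
          · exact hvS
          · exact h
        · intro hz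
          rcases Classical.em (z = v) with h | h
          · exact Or.inl h
          · exact Or.inr ⟨h, hz⟩
      · exact List.isChain_cons_cons.mpr ⟨hxv, hlch⟩
    · push_neg at hpair
      have hB : ∀ v ∈ S, ∀ u ∈ S, v ≠ u → H.Adj v u := hpair
      have hpick : ∃ v ∈ S, H.Adj x v ∧ (¬H.Adj y v ∨ ∀ w ∈ S, H.Adj y w) := by
        by_cases hB2 : ∃ v ∈ S, ¬H.Adj y v
        · obtain ⟨v, hvS, hyv⟩ := hB2
          refine ⟨v, hvS, ?_, Or.inl hyv⟩
          by_contra hxv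
          exact hxy (h1 v hvS x y (fun h => hxS (h ▸ hvS)) (fun h => hyS (h ▸ hvS))
            (fun h => hxv h.symm) (fun h => hyv h.symm))
        · push_neg at hB2
          obtain ⟨v, hvS, hxv⟩ := h2
          exact ⟨v, hvS, hxv, Or.inr hB2⟩
      obtain ⟨v, hvS, hxv, hvy⟩ := hpick
      set S' := S.erase v with hS'
      have hsub : S' ⊂ S := Finset.erase_ssubset hvS
      have hS'ne : S'.Nonempty := by
        rw [← Finset.card_pos, Finset.card_erase_of_mem hvS]; omega
      obtain ⟨w₀, hw₀⟩ := hS'ne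
      have hw₀S := Finset.mem_of_mem_erase hw₀
      have hw₀v := (Finset.mem_erase.mp hw₀).1
      have h3' : ∃ w ∈ S', H.Adj y w := by
        rcases hvy with hyv | hall
        · obtain ⟨w, hwS, hyw⟩ := h3
          have hwv : w ≠ v := fun h => hyv (h ▸ hyw)
          exact ⟨w, Finset.mem_erase.mpr ⟨hwv, hwS⟩, hyw⟩
        · exact ⟨w₀, hw₀, hall w₀ hw₀S⟩
      obtain ⟨l, hlnd, hlmem, hlch⟩ := IH S' hsub v y
        (fun h => hyS (h ▸ hvS))
        (Finset.notMem_erase _ _)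
        (fun h => hyS (Finset.mem_of_mem_erase h))
        ⟨w₀, hw₀⟩
        (fun z hz => h1 z (Finset.mem_of_mem_erase hz))
        ⟨w₀, hw₀, hB v hvS w₀ hw₀S (Ne.symm hw₀v)⟩
        h3'
        (fun _ p hp q hq hpq => hB p (Finset.mem_of_mem_erase hp) q
          (Finset.mem_of_mem_erase hq) hpq)
      refine ⟨v :: l, ?_, ?_, List.isChain_cons_cons.mpr ⟨hxv, hlch⟩⟩
      · refine List.nodup_cons.mpr ⟨?_, hlnd⟩
        intro hvl
        exact Finset.notMem_erase v S ((hlmem v).mp hvl)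
      · intro z
        rw [List.mem_cons, hlmem z, hS', Finset.mem_erase]
        constructor
        · rintro (rfl | ⟨_, h⟩)
          · exact hvS
          · exact h
        · intro hz
          rcases Classical.em (z = v) with h | h
          · exact Or.inl h
          · exact Or.inr ⟨h, hz⟩

private lemma indexed_of_list13 (H : SimpleGraph V) (L : List V) (d : V)
    (hn : L.Nodup) (hc : List.Chain' H.Adj L) :
    IsIndexedPath H (fun i => L.getD (i - 1) d) L.length := by
  constructor
  · intro i j h1i him h1j hjm heq
    simp only at heq
    rw [List.getD_eq_get L d ⟨i - 1, by omega⟩,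
      List.getD_eq_get L d ⟨j - 1, by omega⟩] at heq
    have := (hn.get_inj_iff).mp heq
    simp only [Fin.mk.injEq] at this
    omega
  · intro i h1i hlt
    obtain ⟨k, rfl⟩ : ∃ k, i = k + 1 := ⟨i - 1, by omega⟩
    have h' := List.isChain_iff_getElem.mp hc k (by omega)
    simp only
    rw [Nat.add_sub_cancel, List.getD_eq_get L d ⟨k, by omega⟩,
      Nat.add_sub_cancel, List.getD_eq_get L d ⟨k + 1, by omega⟩]
    exact h'

private lemma getD_reverse13 (l : List V) (d : V) (i : ℕ) (h : i < l.length) :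
    l.reverse.getD i d = l.getD (l.length - 1 - i) d := by
  rw [List.getD_eq_get _ d ⟨i, by simpa using h⟩,
    List.getD_eq_get _ d ⟨l.length - 1 - i, by omega⟩]
  simp only [List.get_eq_getElem]
  exact List.getElem_reverse _

private lemma getD_congr13 (l : List V) (i : ℕ) (d d' : V) (h : i < l.length) :
    l.getD i d = l.getD i d' := by
  rw [List.getD_eq_get _ d ⟨i, h⟩, List.getD_eq_get _ d' ⟨i, h⟩]

private lemma final_package13 (H : SimpleGraph V) (L : List V) (c₁ c₂ aa bb : V) (n i : ℕ)
    (hn : L.Nodup) (hch : List.Chain' H.Adj L) (hlen : L.length = n)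
    (h1 : L.getD 0 c₁ = c₁) (h2 : L.getD (n - 1) c₁ = c₂)
    (hi1 : 1 ≤ i) (hin : i < n)
    (hia : (L.getD (i - 1) c₁ = aa ∧ L.getD i c₁ = bb) ∨
           (L.getD (i - 1) c₁ = bb ∧ L.getD i c₁ = aa)) :
    ∃ x : ℕ → V, IsIndexedPath H x n ∧ x 1 = c₁ ∧ x n = c₂ ∧
      ∃ j, 1 ≤ j ∧ j < n ∧ ((x j = aa ∧ x (j + 1) = bb) ∨ (x j = bb ∧ x (j + 1) = aa)) := by
  refine ⟨fun j => L.getD (j - 1) c₁, ?_, h1, h2, i, hi1, hin, ?_⟩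
  · have := indexed_of_list13 H L c₁ hn hch
    rwa [hlen] at this
  · simpa using hia

open Classical in
private lemma endpoint_case13 [Fintype V] (H : SimpleGraph V) (c₁ c₂ bb : V) (n : ℕ)
    (hn6 : 6 ≤ n) (hcard : Fintype.card V = n)
    (hc : c₁ ≠ c₂) (hb1 : bb ≠ c₁) (hb2 : bb ≠ c₂)
    (hfree : ∀ v, v ≠ bb → H.Adj bb v)
    (huniqH : ∀ v : V, v ≠ c₁ → v ≠ c₂ → ∀ w z : V, v ≠ w → v ≠ z →
      ¬H.Adj v w → ¬H.Adj v z → w = z)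
    (hc2 : ∃ v ∈ (Finset.univ \ {c₁, c₂} : Finset V).erase bb, H.Adj c₂ v) :
    ∃ L : List V, L.Nodup ∧ List.Chain' H.Adj L ∧ L.length = n ∧
      L.getD 0 c₁ = c₁ ∧ L.getD 1 c₁ = bb ∧ L.getD (n - 1) c₁ = c₂ := by
  classical
  set S : Finset V := (Finset.univ \ {c₁, c₂}).erase bb with hS
  have hbU : bb ∈ (Finset.univ \ {c₁, c₂} : Finset V) := by
    simp [hb1, hb2]
  have hUcard : (Finset.univ \ {c₁, c₂} : Finset V).card = n - 2 := by
    rw [Finset.card_sdiff_of_subset (Finset.subset_univ _), Finset.card_univ, hcard,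
      Finset.card_insert_of_notMem (by simp [hc]), Finset.card_singleton]
  have hScard : S.card = n - 3 := by
    rw [hS, Finset.card_erase_of_mem hbU, hUcard]
    omega
  have hmemS : ∀ v ∈ S, v ≠ bb ∧ v ≠ c₁ ∧ v ≠ c₂ := by
    intro v hv
    rw [hS, Finset.mem_erase, Finset.mem_sdiff] at hv
    simp only [Finset.mem_insert, Finset.mem_singleton] at hv
    refine ⟨hv.1, ?_, ?_⟩ <;> intro h <;> exact hv.2.2 (by simp [h])
  have hSne : S.Nonempty := Finset.card_pos.mp (by omega)
  obtain ⟨v₀, hv₀⟩ := hSne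
  obtain ⟨l, hlnd, hlmem, hlch⟩ := master13 H S bb c₂ hb2
    (Finset.notMem_erase _ _)
    (fun h => ((hmemS c₂ h).2.2) rfl)
    ⟨v₀, hv₀⟩
    (fun v hv => huniqH v (hmemS v hv).2.1 (hmemS v hv).2.2)
    ⟨v₀, hv₀, hfree v₀ (hmemS v₀ hv₀).1⟩
    hc2
    (fun h => absurd h (by omega))
  have hc₁l : c₁ ∉ l := fun h => ((hmemS c₁ ((hlmem c₁).mp h)).2.1) rfl
  have hbl : bb ∉ l := fun h => ((hmemS bb ((hlmem bb).mp h)).1) rfl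
  have hc₂l : c₂ ∉ l := fun h => ((hmemS c₂ ((hlmem c₂).mp h)).2.2) rfl
  have hltf : l.toFinset = S := by
    ext v; rw [List.mem_toFinset]; exact hlmem v
  have hllen : l.length = n - 3 := by
    rw [← List.toFinset_card_of_nodup hlnd, hltf, hScard]
  refine ⟨c₁ :: bb :: (l ++ [c₂]), ?_, ?_, ?_, rfl, rfl, ?_⟩
  · refine List.nodup_cons.mpr ⟨?_, List.nodup_cons.mpr ⟨?_, ?_⟩⟩
    · simp only [List.mem_cons, List.mem_append, List.mem_singleton]
      rintro (h | h | h)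
      · exact hb1 h.symm
      · exact hc₁l h
      · rcases h with h | h
        · exact hc h
        · simp at h
    · simp only [List.mem_append, List.mem_singleton]
      rintro (h | h)
      · exact hbl h
      · exact hb2 h
    · rw [List.nodup_append]
      refine ⟨hlnd, List.nodup_singleton _, ?_⟩
      intro x hx y hx2
      simp only [List.mem_singleton] at hx2
      subst hx2
      exact fun e => hc₂l (e ▸ hx)
  · exact List.isChain_cons_cons.mpr ⟨(hfree c₁ (Ne.symm hb1)).symm, hlch⟩
  · simp only [List.length_cons, List.length_append, List.length_singleton,
      List.length_nil]
    omega
  · have e : n - 1 = l.length + 1 + 1 := by omega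
    rw [e, List.getD_cons_succ, List.getD_cons_succ,
      List.getD_append_right l [c₂] c₁ l.length le_rfl, Nat.sub_self, List.getD_cons_zero]

open Classical in
private lemma exception_aux13 [Fintype V] (G : SimpleGraph V) (c₁ c₂ : V) (n : ℕ)
    (hn6 : 6 ≤ n) (hcard : Fintype.card V = n) (hc : c₁ ≠ c₂) (hne : ¬G.Adj c₁ c₂)
    (huniq : ∀ v : V, v ≠ c₁ → v ≠ c₂ → ∀ w z : V, v ≠ w → v ≠ z →
      ¬G.Adj v w → ¬G.Adj v z → w = z)
    (hex : ∀ v : V, v ≠ c₁ → v ≠ c₂ → ∃ p, p ≠ v ∧ ¬G.Adj v p)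
    (hA : ((Finset.univ \ {c₁, c₂}).filter (fun v => ¬G.Adj c₁ v)).card = n - 3) :
    ∃ w : V, (Finset.univ \ {c₁, c₂} : Finset V).filter (fun v => ¬G.Adj c₂ v) = {w} := by
  classical
  set U := (Finset.univ \ {c₁, c₂} : Finset V) with hU
  have hmemU : ∀ v, v ∈ U ↔ (v ≠ c₁ ∧ v ≠ c₂) := by
    intro v
    rw [hU, Finset.mem_sdiff]
    simp only [Finset.mem_univ, true_and, Finset.mem_insert, Finset.mem_singleton]
    push_neg
    rfl
  have hUcard : U.card = n - 2 := by
    rw [hU, Finset.card_sdiff_of_subset (Finset.subset_univ _), Finset.card_univ, hcard,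
      Finset.card_insert_of_notMem (by simp [hc]), Finset.card_singleton]
  have hrest : (U \ U.filter (fun v => ¬G.Adj c₁ v)).card = 1 := by
    rw [Finset.card_sdiff_of_subset (Finset.filter_subset _ _), hUcard, hA]
    omega
  obtain ⟨w, hw⟩ := Finset.card_eq_one.mp hrest
  have hwmem : w ∈ U \ U.filter (fun v => ¬G.Adj c₁ v) := by
    rw [hw]; exact Finset.mem_singleton_self w
  rw [Finset.mem_sdiff] at hwmem
  obtain ⟨hwU, hwnf⟩ := hwmem
  have hw1 : w ≠ c₁ := ((hmemU w).mp hwU).1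
  have hw2 : w ≠ c₂ := ((hmemU w).mp hwU).2
  have hadjw : G.Adj c₁ w := by
    by_contra h
    exact hwnf (Finset.mem_filter.mpr ⟨hwU, h⟩)
  -- any member of U other than w is a non-neighbour of c₁
  have hinA : ∀ z, z ∈ U → z ≠ w → ¬G.Adj c₁ z := by
    intro z hzU hzw
    intro h
    have : z ∈ U \ U.filter (fun v => ¬G.Adj c₁ v) :=
      Finset.mem_sdiff.mpr ⟨hzU, fun hf => (Finset.mem_filter.mp hf).2 h⟩
    rw [hw, Finset.mem_singleton] at this
    exact hzw this
  -- w's non-neighbour is c₂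
  obtain ⟨p, hpw, hpn⟩ := hex w hw1 hw2
  have hpc₁ : p ≠ c₁ := fun h => hpn (h ▸ hadjw.symm)
  have hpc₂ : p = c₂ := by
    by_contra hpc
    have hpU : p ∈ U := (hmemU p).mpr ⟨hpc₁, hpc⟩
    have hpA : ¬G.Adj c₁ p := hinA p hpU hpw
    have := huniq p hpc₁ hpc w c₁ hpw hpc₁
      (fun h => hpn h.symm) (fun h => hpA h.symm)
    exact hw1 this
  rw [hpc₂] at hpn
  refine ⟨w, ?_⟩
  apply Finset.eq_singleton_iff_unique_mem.mpr
  constructor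
  · exact Finset.mem_filter.mpr ⟨hwU, fun h => hpn h.symm⟩
  · intro z hz
    rw [Finset.mem_filter] at hz
    obtain ⟨hzU, hzn⟩ := hz
    by_contra hzw
    have hzA : ¬G.Adj c₁ z := hinA z hzU hzw
    have hz1 : z ≠ c₁ := ((hmemU z).mp hzU).1
    have hz2 : z ≠ c₂ := ((hmemU z).mp hzU).2
    exact hc (huniq z hz1 hz2 c₁ c₂ hz1 hz2
      (fun h => hzA h.symm) (fun h => hzn h.symm))

end Aux
/-- Proposition 4.1 (iii): after adding a non-edge `ab`, a Hamilton path from `c₁` to `c₂`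
through `ab`, except possibly in the degenerate degree case. -/
theorem stmt_13 {V : Type*} [Fintype V] (G : SimpleGraph V) (hcon : G.Connected)
    (hcard : 6 ≤ Fintype.card V) (c₁ c₂ : V) (hc : c₁ ≠ c₂) (hne : ¬G.Adj c₁ c₂)
    (hdeg : ∀ v : V, v ≠ c₁ → v ≠ c₂ → (G.neighborSet v).ncard = Fintype.card V - 2)
    (a b : V) (hab : a ≠ b) (hnadj : ¬G.Adj a b) (hne' : ({a, b} : Set V) ≠ {c₁, c₂}) :
    ((G.neighborSet c₁).ncard = 1 ∧ (G.neighborSet c₂).ncard = Fintype.card V - 3) ∨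
    ((G.neighborSet c₁).ncard = Fintype.card V - 3 ∧ (G.neighborSet c₂).ncard = 1) ∨
    ∃ x : ℕ → V,
      IsIndexedPath (G ⊔ SimpleGraph.fromEdgeSet {s(a, b)}) x (Fintype.card V) ∧
      x 1 = c₁ ∧ x (Fintype.card V) = c₂ ∧
      ∃ i, 1 ≤ i ∧ i < Fintype.card V ∧
        ((x i = a ∧ x (i + 1) = b) ∨ (x i = b ∧ x (i + 1) = a)) := by
  classical
  set n := Fintype.card V with hn
  have hn6 : 6 ≤ n := hcard
  set H := G ⊔ SimpleGraph.fromEdgeSet {s(a, b)} with hHdef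
  have hHadj : ∀ u v : V, H.Adj u v ↔ (G.Adj u v ∨ ((u = a ∧ v = b) ∨ (u = b ∧ v = a))) := by
    intro u v
    rw [hHdef]
    simp only [SimpleGraph.sup_adj, SimpleGraph.fromEdgeSet_adj, Set.mem_singleton_iff,
      Sym2.eq_iff]
    constructor
    · rintro (h | ⟨h, _⟩)
      · exact Or.inl h
      · exact Or.inr h
    · rintro (h | h)
      · exact Or.inl h
      · refine Or.inr ⟨h, ?_⟩
        rcases h with ⟨rfl, rfl⟩ | ⟨rfl, rfl⟩
        · exact hab
        · exact Ne.symm hab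
  have hGH : ∀ u v : V, G.Adj u v → H.Adj u v := fun u v h => (hHadj u v).mpr (Or.inl h)
  set U : Finset V := Finset.univ \ {c₁, c₂} with hU
  have hmemU : ∀ v, v ∈ U ↔ (v ≠ c₁ ∧ v ≠ c₂) := by
    intro v
    rw [hU, Finset.mem_sdiff]
    simp only [Finset.mem_univ, true_and, Finset.mem_insert, Finset.mem_singleton]
    push_neg
    rfl
  have hUcard : U.card = n - 2 := by
    rw [hU, Finset.card_sdiff_of_subset (Finset.subset_univ _), Finset.card_univ, ← hn,
      Finset.card_insert_of_notMem (by simp [hc]), Finset.card_singleton]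
  have hsetF : ∀ v : V, G.neighborSet v = ↑(Finset.univ.filter (fun w => G.Adj v w)) := by
    intro v; ext w; simp
  have hncardF : ∀ v : V, (G.neighborSet v).ncard =
      (Finset.univ.filter (fun w => G.Adj v w)).card := by
    intro v; rw [hsetF v, Set.ncard_coe_finset]
  have hdegF : ∀ v : V, v ≠ c₁ → v ≠ c₂ →
      (Finset.univ.filter (fun w => G.Adj v w)).card = n - 2 := by
    intro v h1 h2
    have h := hdeg v h1 h2
    rwa [hncardF v] at h
  have huniq : ∀ v : V, v ≠ c₁ → v ≠ c₂ → ∀ w z : V, v ≠ w → v ≠ z →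
      ¬G.Adj v w → ¬G.Adj v z → w = z := by
    intro v h1 h2 w z hvw hvz hw hz
    by_contra hwz
    have hsub : Finset.univ.filter (fun u => G.Adj v u) ⊆ Finset.univ \ {v, w, z} := by
      intro u hu
      rw [Finset.mem_filter] at hu
      rw [Finset.mem_sdiff]
      refine ⟨Finset.mem_univ u, ?_⟩
      simp only [Finset.mem_insert, Finset.mem_singleton]
      push_neg
      exact ⟨hu.2.ne', fun e => hw (e ▸ hu.2), fun e => hz (e ▸ hu.2)⟩
    have hc3 : ({v, w, z} : Finset V).card = 3 := by
      rw [Finset.card_insert_of_notMem (by simp [hvw, hvz]),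
        Finset.card_insert_of_notMem (by simp [hwz]), Finset.card_singleton]
    have hle := Finset.card_le_card hsub
    rw [hdegF v h1 h2, Finset.card_sdiff_of_subset (Finset.subset_univ _), Finset.card_univ, ← hn,
      hc3] at hle
    omega
  have hex : ∀ v : V, v ≠ c₁ → v ≠ c₂ → ∃ p, p ≠ v ∧ ¬G.Adj v p := by
    intro v h1 h2
    by_contra hno
    push_neg at hno
    have hsub : Finset.univ.erase v ⊆ Finset.univ.filter (fun u => G.Adj v u) := by
      intro u hu
      exact Finset.mem_filter.mpr ⟨Finset.mem_univ u, hno u (Finset.ne_of_mem_erase hu)⟩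
    have hle := Finset.card_le_card hsub
    rw [Finset.card_erase_of_mem (Finset.mem_univ v), Finset.card_univ, ← hn,
      hdegF v h1 h2] at hle
    omega
  set A₁ : Finset V := U.filter (fun v => ¬G.Adj c₁ v) with hA₁
  set A₂ : Finset V := U.filter (fun v => ¬G.Adj c₂ v) with hA₂
  have hnb1 : Finset.univ.filter (fun w => G.Adj c₁ w) = U.filter (fun w => G.Adj c₁ w) := by
    ext w
    constructor
    · intro h
      have h' := (Finset.mem_filter.mp h).2
      exact Finset.mem_filter.mpr ⟨(hmemU w).mpr ⟨h'.ne', fun e => hne (e ▸ h')⟩, h'⟩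
    · intro h
      exact Finset.mem_filter.mpr ⟨Finset.mem_univ w, (Finset.mem_filter.mp h).2⟩
  have hnb2 : Finset.univ.filter (fun w => G.Adj c₂ w) = U.filter (fun w => G.Adj c₂ w) := by
    ext w
    constructor
    · intro h
      have h' := (Finset.mem_filter.mp h).2
      exact Finset.mem_filter.mpr ⟨(hmemU w).mpr ⟨fun e => hne (e ▸ h').symm, h'.ne'⟩, h'⟩
    · intro h
      exact Finset.mem_filter.mpr ⟨Finset.mem_univ w, (Finset.mem_filter.mp h).2⟩
  have hsplit1 : (Finset.univ.filter (fun w => G.Adj c₁ w)).card + A₁.card = n - 2 := by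
    rw [hnb1, hA₁, Finset.card_filter_add_card_filter_not, hUcard]
  have hsplit2 : (Finset.univ.filter (fun w => G.Adj c₂ w)).card + A₂.card = n - 2 := by
    rw [hnb2, hA₂, Finset.card_filter_add_card_filter_not, hUcard]
  have hdpos1 : 0 < (Finset.univ.filter (fun w => G.Adj c₁ w)).card := by
    obtain ⟨w, hw⟩ := Fintype.exists_ne_of_one_lt_card (by omega) c₁
    obtain ⟨p⟩ := hcon.preconnected c₁ w
    cases p with
    | nil => exact absurd rfl hw
    | cons h q =>
      exact Finset.card_pos.mpr ⟨_, Finset.mem_filter.mpr ⟨Finset.mem_univ _, h⟩⟩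
  have hdpos2 : 0 < (Finset.univ.filter (fun w => G.Adj c₂ w)).card := by
    obtain ⟨w, hw⟩ := Fintype.exists_ne_of_one_lt_card (by omega) c₂
    obtain ⟨p⟩ := hcon.preconnected c₂ w
    cases p with
    | nil => exact absurd rfl hw
    | cons h q =>
      exact Finset.card_pos.mpr ⟨_, Finset.mem_filter.mpr ⟨Finset.mem_univ _, h⟩⟩
  by_cases e₁ : A₁.card = n - 3
  · left
    obtain ⟨w, hw⟩ := exception_aux13 G c₁ c₂ n hn6 hn.symm hc hne huniq hex e₁
    have hA₂1 : A₂.card = 1 := by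
      have : A₂ = {w} := hw
      rw [this, Finset.card_singleton]
    constructor
    · rw [hncardF c₁]; omega
    · rw [hncardF c₂]; omega
  by_cases e₂ : A₂.card = n - 3
  · right; left
    have hUsw : (Finset.univ \ {c₂, c₁} : Finset V) = U := by rw [hU, Finset.pair_comm]
    obtain ⟨w, hw⟩ := exception_aux13 G c₂ c₁ n hn6 hn.symm hc.symm (fun h => hne h.symm)
      (fun v h2 h1 => huniq v h1 h2) (fun v h2 h1 => hex v h1 h2)
      (by rw [hUsw]; exact e₂)
    have hA₁1 : A₁.card = 1 := by
      have : A₁ = {w} := by rw [hA₁, ← hUsw]; exact hw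
      rw [this, Finset.card_singleton]
    constructor
    · rw [hncardF c₁]; omega
    · rw [hncardF c₂]; omega
  right; right
  have hA1le : A₁.card ≤ n - 4 := by omega
  have hA2le : A₂.card ≤ n - 4 := by omega
  have hHuniq : ∀ v : V, v ≠ c₁ → v ≠ c₂ → ∀ w z : V, v ≠ w → v ≠ z →
      ¬H.Adj v w → ¬H.Adj v z → w = z := fun v h1 h2 w z hw hz hnw hnz =>
    huniq v h1 h2 w z hw hz (fun h => hnw (hGH _ _ h)) (fun h => hnz (hGH _ _ h))
  by_cases ha1 : a = c₁
  · have hb1 : b ≠ c₁ := fun h => hab (by rw [ha1, h])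
    have hb2 : b ≠ c₂ := fun h => hne' (by rw [ha1, h])
    have hban : ¬G.Adj b a := fun h => hnadj h.symm
    have hbfree : ∀ v, v ≠ b → H.Adj b v := by
      intro v hvb
      rcases Classical.em (v = a) with rfl | hva
      · exact (hHadj b v).mpr (Or.inr (Or.inr ⟨rfl, rfl⟩))
      · refine hGH _ _ ?_
        by_contra h
        exact hva (huniq b hb1 hb2 v a (Ne.symm hvb) (Ne.symm hab) h hban)
    have hbA₂ : b ∉ A₂ := by
      intro hmem
      have hnb : ¬G.Adj c₂ b := (Finset.mem_filter.mp hmem).2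
      have heq := huniq b hb1 hb2 a c₂ (Ne.symm hab) hb2 hban (fun e => hnb e.symm)
      exact hc (ha1 ▸ heq)
    have hbU : b ∈ U := (hmemU b).mpr ⟨hb1, hb2⟩
    have hc2ex : ∃ v ∈ U.erase b, H.Adj c₂ v := by
      have hsubA : A₂ ⊆ U.erase b := by
        intro z hz
        exact Finset.mem_erase.mpr ⟨fun e => hbA₂ (e ▸ hz), (Finset.mem_filter.mp hz).1⟩
      have hcardS : (U.erase b).card = n - 3 := by
        rw [Finset.card_erase_of_mem hbU, hUcard]
        omega
      have hne0 : ((U.erase b) \ A₂).Nonempty := by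
        rw [← Finset.card_pos]
        have := Finset.le_card_sdiff A₂ (U.erase b)
        omega
      obtain ⟨v, hv⟩ := hne0
      rw [Finset.mem_sdiff] at hv
      refine ⟨v, hv.1, hGH _ _ ?_⟩
      by_contra h
      exact hv.2 (Finset.mem_filter.mpr ⟨Finset.mem_of_mem_erase hv.1, h⟩)
    obtain ⟨L, hLnd, hLch, hLlen, hL0, hL1, hLlast⟩ :=
      endpoint_case13 H c₁ c₂ b n hn6 hn.symm hc hb1 hb2 hbfree hHuniq hc2ex
    exact final_package13 H L c₁ c₂ a b n 1 hLnd hLch hLlen hL0 hLlast le_rfl (by omega)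
      (Or.inl ⟨by rw [hL0]; exact ha1.symm, hL1⟩)
  by_cases hb1x : b = c₁
  · have ha1' : a ≠ c₁ := ha1
    have ha2' : a ≠ c₂ := fun h => hne' (by rw [h, hb1x, Set.pair_comm])
    have hafree : ∀ v, v ≠ a → H.Adj a v := by
      intro v hva
      rcases Classical.em (v = b) with rfl | hvb
      · exact (hHadj a v).mpr (Or.inr (Or.inl ⟨rfl, rfl⟩))
      · refine hGH _ _ ?_
        by_contra h
        exact hvb (huniq a ha1' ha2' v b (Ne.symm hva) hab h hnadj)
    have haA₂ : a ∉ A₂ := by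
      intro hmem
      have hna : ¬G.Adj c₂ a := (Finset.mem_filter.mp hmem).2
      have heq := huniq a ha1' ha2' b c₂ hab ha2' hnadj (fun e => hna e.symm)
      exact hc (hb1x ▸ heq)
    have haU : a ∈ U := (hmemU a).mpr ⟨ha1', ha2'⟩
    have hc2ex : ∃ v ∈ U.erase a, H.Adj c₂ v := by
      have hsubA : A₂ ⊆ U.erase a := by
        intro z hz
        exact Finset.mem_erase.mpr ⟨fun e => haA₂ (e ▸ hz), (Finset.mem_filter.mp hz).1⟩
      have hcardS : (U.erase a).card = n - 3 := by
        rw [Finset.card_erase_of_mem haU, hUcard]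
        omega
      have hne0 : ((U.erase a) \ A₂).Nonempty := by
        rw [← Finset.card_pos]
        have := Finset.le_card_sdiff A₂ (U.erase a)
        omega
      obtain ⟨v, hv⟩ := hne0
      rw [Finset.mem_sdiff] at hv
      refine ⟨v, hv.1, hGH _ _ ?_⟩
      by_contra h
      exact hv.2 (Finset.mem_filter.mpr ⟨Finset.mem_of_mem_erase hv.1, h⟩)
    obtain ⟨L, hLnd, hLch, hLlen, hL0, hL1, hLlast⟩ :=
      endpoint_case13 H c₁ c₂ a n hn6 hn.symm hc ha1' ha2' hafree hHuniq hc2ex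
    exact final_package13 H L c₁ c₂ a b n 1 hLnd hLch hLlen hL0 hLlast le_rfl (by omega)
      (Or.inr ⟨by rw [hL0]; exact hb1x.symm, hL1⟩)
  by_cases ha2x : a = c₂
  · have hb2' : b ≠ c₂ := fun h => hab (by rw [ha2x, h])
    have hban : ¬G.Adj b a := fun h => hnadj h.symm
    have hbfree : ∀ v, v ≠ b → H.Adj b v := by
      intro v hvb
      rcases Classical.em (v = a) with rfl | hva
      · exact (hHadj b v).mpr (Or.inr (Or.inr ⟨rfl, rfl⟩))
      · refine hGH _ _ ?_
        by_contra h
        exact hva (huniq b hb1x hb2' v a (Ne.symm hvb) (Ne.symm hab) h hban)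
    have hbA₁ : b ∉ A₁ := by
      intro hmem
      have hnb : ¬G.Adj c₁ b := (Finset.mem_filter.mp hmem).2
      have heq := huniq b hb1x hb2' a c₁ (Ne.symm hab) hb1x hban (fun e => hnb e.symm)
      exact hc (ha2x ▸ heq).symm
    have hbU : b ∈ U := (hmemU b).mpr ⟨hb1x, hb2'⟩
    have hc1ex : ∃ v ∈ U.erase b, H.Adj c₁ v := by
      have hsubA : A₁ ⊆ U.erase b := by
        intro z hz
        exact Finset.mem_erase.mpr ⟨fun e => hbA₁ (e ▸ hz), (Finset.mem_filter.mp hz).1⟩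
      have hcardS : (U.erase b).card = n - 3 := by
        rw [Finset.card_erase_of_mem hbU, hUcard]
        omega
      have hne0 : ((U.erase b) \ A₁).Nonempty := by
        rw [← Finset.card_pos]
        have := Finset.le_card_sdiff A₁ (U.erase b)
        omega
      obtain ⟨v, hv⟩ := hne0
      rw [Finset.mem_sdiff] at hv
      refine ⟨v, hv.1, hGH _ _ ?_⟩
      by_contra h
      exact hv.2 (Finset.mem_filter.mpr ⟨Finset.mem_of_mem_erase hv.1, h⟩)
    have hUsw : (Finset.univ \ {c₂, c₁} : Finset V) = U := by rw [hU, Finset.pair_comm]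
    obtain ⟨L, hLnd, hLch, hLlen, hL0, hL1, hLlast⟩ :=
      endpoint_case13 H c₂ c₁ b n hn6 hn.symm hc.symm hb2' hb1x hbfree
        (fun v h2 h1 => hHuniq v h1 h2) (by rw [hUsw]; exact hc1ex)
    have hrev0 : L.reverse.getD 0 c₁ = c₁ := by
      rw [getD_reverse13 L c₁ 0 (by rw [hLlen]; omega),
        (show L.length - 1 - 0 = n - 1 by rw [hLlen]; omega),
        getD_congr13 L (n - 1) c₁ c₂ (by rw [hLlen]; omega), hLlast]
    have hrevlast : L.reverse.getD (n - 1) c₁ = c₂ := by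
      rw [getD_reverse13 L c₁ (n - 1) (by rw [hLlen]; omega),
        (show L.length - 1 - (n - 1) = 0 by rw [hLlen]; omega),
        getD_congr13 L 0 c₁ c₂ (by rw [hLlen]; omega), hL0]
    have hrevb : L.reverse.getD (n - 2) c₁ = b := by
      rw [getD_reverse13 L c₁ (n - 2) (by rw [hLlen]; omega),
        (show L.length - 1 - (n - 2) = 1 by rw [hLlen]; omega),
        getD_congr13 L 1 c₁ c₂ (by rw [hLlen]; omega), hL1]
    exact final_package13 H L.reverse c₁ c₂ a b n (n - 1) (List.nodup_reverse.mpr hLnd)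
      (List.isChain_reverse.mpr (List.IsChain.imp (fun u v h => h.symm) hLch))
      (by simpa using hLlen) hrev0 hrevlast (by omega) (by omega)
      (Or.inr ⟨hrevb, by rw [hrevlast]; exact ha2x.symm⟩)
  by_cases hb2x : b = c₂
  · have ha2' : a ≠ c₂ := ha2x
    have hafree : ∀ v, v ≠ a → H.Adj a v := by
      intro v hva
      rcases Classical.em (v = b) with rfl | hvb
      · exact (hHadj a v).mpr (Or.inr (Or.inl ⟨rfl, rfl⟩))
      · refine hGH _ _ ?_
        by_contra h
        exact hvb (huniq a ha1 ha2' v b (Ne.symm hva) hab h hnadj)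
    have haA₁ : a ∉ A₁ := by
      intro hmem
      have hna : ¬G.Adj c₁ a := (Finset.mem_filter.mp hmem).2
      have heq := huniq a ha1 ha2' b c₁ hab ha1 hnadj (fun e => hna e.symm)
      exact hc (hb2x ▸ heq).symm
    have haU : a ∈ U := (hmemU a).mpr ⟨ha1, ha2'⟩
    have hc1ex : ∃ v ∈ U.erase a, H.Adj c₁ v := by
      have hsubA : A₁ ⊆ U.erase a := by
        intro z hz
        exact Finset.mem_erase.mpr ⟨fun e => haA₁ (e ▸ hz), (Finset.mem_filter.mp hz).1⟩
      have hcardS : (U.erase a).card = n - 3 := by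
        rw [Finset.card_erase_of_mem haU, hUcard]
        omega
      have hne0 : ((U.erase a) \ A₁).Nonempty := by
        rw [← Finset.card_pos]
        have := Finset.le_card_sdiff A₁ (U.erase a)
        omega
      obtain ⟨v, hv⟩ := hne0
      rw [Finset.mem_sdiff] at hv
      refine ⟨v, hv.1, hGH _ _ ?_⟩
      by_contra h
      exact hv.2 (Finset.mem_filter.mpr ⟨Finset.mem_of_mem_erase hv.1, h⟩)
    have hUsw : (Finset.univ \ {c₂, c₁} : Finset V) = U := by rw [hU, Finset.pair_comm]
    obtain ⟨L, hLnd, hLch, hLlen, hL0, hL1, hLlast⟩ :=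
      endpoint_case13 H c₂ c₁ a n hn6 hn.symm hc.symm ha2' ha1 hafree
        (fun v h2 h1 => hHuniq v h1 h2) (by rw [hUsw]; exact hc1ex)
    have hrev0 : L.reverse.getD 0 c₁ = c₁ := by
      rw [getD_reverse13 L c₁ 0 (by rw [hLlen]; omega),
        (show L.length - 1 - 0 = n - 1 by rw [hLlen]; omega),
        getD_congr13 L (n - 1) c₁ c₂ (by rw [hLlen]; omega), hLlast]
    have hrevlast : L.reverse.getD (n - 1) c₁ = c₂ := by
      rw [getD_reverse13 L c₁ (n - 1) (by rw [hLlen]; omega),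
        (show L.length - 1 - (n - 1) = 0 by rw [hLlen]; omega),
        getD_congr13 L 0 c₁ c₂ (by rw [hLlen]; omega), hL0]
    have hreva : L.reverse.getD (n - 2) c₁ = a := by
      rw [getD_reverse13 L c₁ (n - 2) (by rw [hLlen]; omega),
        (show L.length - 1 - (n - 2) = 1 by rw [hLlen]; omega),
        getD_congr13 L 1 c₁ c₂ (by rw [hLlen]; omega), hL1]
    exact final_package13 H L.reverse c₁ c₂ a b n (n - 1) (List.nodup_reverse.mpr hLnd)
      (List.isChain_reverse.mpr (List.IsChain.imp (fun u v h => h.symm) hLch))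
      (by simpa using hLlen) hrev0 hrevlast (by omega) (by omega)
      (Or.inl ⟨hreva, by rw [hrevlast]; exact hb2x.symm⟩)
  -- both a and b are interior vertices
  have ha2' : a ≠ c₂ := ha2x
  have hb2' : b ≠ c₂ := hb2x
  have haU : a ∈ U := (hmemU a).mpr ⟨ha1, ha2'⟩
  have hbU : b ∈ U := (hmemU b).mpr ⟨hb1x, hb2'⟩
  have hafree : ∀ v, v ≠ a → H.Adj a v := by
    intro v hva
    rcases Classical.em (v = b) with rfl | hvb
    · exact (hHadj a v).mpr (Or.inr (Or.inl ⟨rfl, rfl⟩))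
    · refine hGH _ _ ?_
      by_contra h
      exact hvb (huniq a ha1 ha2' v b (Ne.symm hva) hab h hnadj)
  have hbfree : ∀ v, v ≠ b → H.Adj b v := by
    intro v hvb
    rcases Classical.em (v = a) with rfl | hva
    · exact (hHadj b v).mpr (Or.inr (Or.inr ⟨rfl, rfl⟩))
    · refine hGH _ _ ?_
      by_contra h
      exact hva (huniq b hb1x hb2' v a (Ne.symm hvb) (Ne.symm hab) h
        (fun e => hnadj e.symm))
  set S : Finset V := (U.erase a).erase b with hS
  have hbUa : b ∈ U.erase a := Finset.mem_erase.mpr ⟨Ne.symm hab, hbU⟩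
  have hScard : S.card = n - 4 := by
    rw [hS, Finset.card_erase_of_mem hbUa, Finset.card_erase_of_mem haU, hUcard]
    omega
  have hmemS : ∀ v ∈ S, v ≠ a ∧ v ≠ b ∧ v ≠ c₁ ∧ v ≠ c₂ := by
    intro v hv
    rw [hS] at hv
    have hvb := (Finset.mem_erase.mp hv).1
    have hv' := Finset.mem_of_mem_erase hv
    have hva := (Finset.mem_erase.mp hv').1
    have hvU := Finset.mem_of_mem_erase hv'
    exact ⟨hva, hvb, ((hmemU v).mp hvU).1, ((hmemU v).mp hvU).2⟩
  have haS : a ∉ S := by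
    intro h
    rw [hS] at h
    exact Finset.notMem_erase a U (Finset.mem_of_mem_erase h)
  have hbS : b ∉ S := by
    intro h
    rw [hS] at h
    exact Finset.notMem_erase b _ h
  have hc₁nS : c₁ ∉ S := fun h => (hmemS c₁ h).2.2.1 rfl
  have hc₂nS : c₂ ∉ S := fun h => (hmemS c₂ h).2.2.2 rfl
  have hSne : S.Nonempty := Finset.card_pos.mp (by omega)
  obtain ⟨v₀, hv₀⟩ := hSne
  have h1S : ∀ v ∈ S, ∀ w z : V, v ≠ w → v ≠ z → ¬H.Adj v w → ¬H.Adj v z → w = z :=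
    fun v hv => hHuniq v (hmemS v hv).2.2.1 (hmemS v hv).2.2.2
  by_cases hiso : S.card = 2 ∧ ∃ p ∈ S, ∃ q ∈ S, p ≠ q ∧ ¬H.Adj p q
  · obtain ⟨hS2, p, hp, q, hq, hpq, hnpq⟩ := hiso
    have hn6eq : n = 6 := by omega
    have hnpqG : ¬G.Adj p q := fun h => hnpq (hGH _ _ h)
    obtain ⟨hpa, hpb, hpc₁, hpc₂⟩ := hmemS p hp
    obtain ⟨hqa, hqb, hqc₁, hqc₂⟩ := hmemS q hq
    have hc₁p : G.Adj c₁ p := by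
      by_contra h
      exact hqc₁ (huniq p hpc₁ hpc₂ q c₁ hpq hpc₁ hnpqG (fun e => h e.symm))
    have hqc₂adj : G.Adj q c₂ := by
      by_contra h
      exact hpc₂ (huniq q hqc₁ hqc₂ p c₂ (Ne.symm hpq) hqc₂ (fun e => hnpqG e.symm) h)
    have hLnd : ([c₁, p, a, b, q, c₂] : List V).Nodup := by
      refine List.nodup_cons.mpr ⟨?_, List.nodup_cons.mpr ⟨?_, List.nodup_cons.mpr ⟨?_,
        List.nodup_cons.mpr ⟨?_, List.nodup_cons.mpr ⟨?_, List.nodup_singleton _⟩⟩⟩⟩⟩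
      · simp only [List.mem_cons, List.not_mem_nil, or_false, List.mem_singleton]
        push_neg
        exact ⟨Ne.symm hpc₁, fun e => ha1 e.symm, fun e => hb1x e.symm, Ne.symm hqc₁, hc⟩
      · simp only [List.mem_cons, List.not_mem_nil, or_false, List.mem_singleton]
        push_neg
        exact ⟨hpa, hpb, hpq, hpc₂⟩
      · simp only [List.mem_cons, List.not_mem_nil, or_false, List.mem_singleton]
        push_neg
        exact ⟨hab, Ne.symm hqa, ha2'⟩
      · simp only [List.mem_cons, List.not_mem_nil, or_false, List.mem_singleton]
        push_neg
        exact ⟨Ne.symm hqb, hb2'⟩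
      · simp only [List.mem_singleton]
        exact hqc₂
    have hLch : List.Chain' H.Adj ([c₁, p, a, b, q, c₂] : List V) := by
      refine List.isChain_cons_cons.mpr ⟨hGH _ _ hc₁p, List.isChain_cons_cons.mpr ⟨(hafree p hpa).symm,
        List.isChain_cons_cons.mpr ⟨(hHadj a b).mpr (Or.inr (Or.inl ⟨rfl, rfl⟩)),
        List.isChain_cons_cons.mpr ⟨hbfree q hqb, List.isChain_cons_cons.mpr
        ⟨hGH _ _ hqc₂adj, List.isChain_singleton _⟩⟩⟩⟩⟩
    have hLlen : ([c₁, p, a, b, q, c₂] : List V).length = n := by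
      simp only [List.length_cons, List.length_nil]
      omega
    exact final_package13 H [c₁, p, a, b, q, c₂] c₁ c₂ a b n 3 hLnd hLch hLlen rfl
      (by rw [hn6eq]; rfl) (by omega) (by omega) (Or.inl ⟨rfl, rfl⟩)
  · have h4' : S.card = 2 → ∀ p ∈ S, ∀ q ∈ S, p ≠ q → H.Adj p q := by
      intro h2 p hp q hq hpq
      by_contra hnp
      exact hiso ⟨h2, p, hp, q, hq, hpq, hnp⟩
    by_cases hc2S : ∃ v ∈ S, G.Adj c₂ v
    · obtain ⟨w₂, hw₂S, hw₂⟩ := hc2S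
      obtain ⟨l, hlnd, hlmem, hlch⟩ := master13 H S b c₂ hb2' hbS hc₂nS ⟨v₀, hv₀⟩ h1S
        ⟨v₀, hv₀, hbfree v₀ (hmemS v₀ hv₀).2.1⟩
        ⟨w₂, hw₂S, hGH _ _ hw₂⟩
        h4'
      have hltf : l.toFinset = S := by
        ext v; rw [List.mem_toFinset]; exact hlmem v
      have hllen : l.length = n - 4 := by
        rw [← List.toFinset_card_of_nodup hlnd, hltf, hScard]
      have hal : a ∉ l := fun h => (hmemS a ((hlmem a).mp h)).1 rfl
      have hbl : b ∉ l := fun h => (hmemS b ((hlmem b).mp h)).2.1 rfl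
      have hc₁l : c₁ ∉ l := fun h => (hmemS c₁ ((hlmem c₁).mp h)).2.2.1 rfl
      have hc₂l : c₂ ∉ l := fun h => (hmemS c₂ ((hlmem c₂).mp h)).2.2.2 rfl
      have hc₁adja : G.Adj c₁ a := by
        by_contra h
        exact hb1x (huniq a ha1 ha2' b c₁ hab ha1 hnadj (fun e => h e.symm))
      have hLnd : (c₁ :: a :: b :: (l ++ [c₂])).Nodup := by
        refine List.nodup_cons.mpr ⟨?_, List.nodup_cons.mpr ⟨?_, List.nodup_cons.mpr
          ⟨?_, ?_⟩⟩⟩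
        · simp only [List.mem_cons, List.mem_append, List.mem_singleton,
            List.not_mem_nil, or_false]
          rintro (h | h | h | h)
          · exact ha1 h.symm
          · exact hb1x h.symm
          · exact hc₁l h
          · exact hc h
        · simp only [List.mem_cons, List.mem_append, List.mem_singleton,
            List.not_mem_nil, or_false]
          rintro (h | h | h)
          · exact hab h
          · exact hal h
          · exact ha2' h
        · simp only [List.mem_append, List.mem_singleton, List.mem_cons,
            List.not_mem_nil, or_false]
          rintro (h | h)
          · exact hbl h
          · exact hb2' h
        · rw [List.nodup_append]
          refine ⟨hlnd, List.nodup_singleton _, ?_⟩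
          intro x hx y hx2
          simp only [List.mem_singleton] at hx2
          subst hx2
          exact fun e => hc₂l (e ▸ hx)
      have hLch : List.Chain' H.Adj (c₁ :: a :: b :: (l ++ [c₂])) :=
        List.isChain_cons_cons.mpr ⟨hGH _ _ hc₁adja, List.isChain_cons_cons.mpr
          ⟨(hHadj a b).mpr (Or.inr (Or.inl ⟨rfl, rfl⟩)), hlch⟩⟩
      have hLlen : (c₁ :: a :: b :: (l ++ [c₂])).length = n := by
        simp only [List.length_cons, List.length_append, List.length_singleton,
          List.length_nil]
        omega
      have hend : (c₁ :: a :: b :: (l ++ [c₂])).getD (n - 1) c₁ = c₂ := by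
        rw [show n - 1 = l.length + 1 + 1 + 1 by omega, List.getD_cons_succ,
          List.getD_cons_succ, List.getD_cons_succ,
          List.getD_append_right l [c₂] c₁ l.length le_rfl, Nat.sub_self,
          List.getD_cons_zero]
      exact final_package13 H (c₁ :: a :: b :: (l ++ [c₂])) c₁ c₂ a b n 2 hLnd hLch hLlen
        rfl hend (by omega) (by omega) (Or.inl ⟨rfl, rfl⟩)
    · push_neg at hc2S
      have hSadj : ∀ v ∈ S, ∀ w : V, v ≠ w → w ≠ c₂ → G.Adj v w := by
        intro v hv w hvw hwc
        by_contra h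
        exact hwc (huniq v (hmemS v hv).2.2.1 (hmemS v hv).2.2.2 w c₂ hvw
          (hmemS v hv).2.2.2 h (fun e => hc2S v hv e.symm))
      obtain ⟨l, hlnd, hlmem, hlch⟩ := master13 H S c₁ a (fun e => ha1 e.symm) hc₁nS haS
        ⟨v₀, hv₀⟩ h1S
        ⟨v₀, hv₀, hGH _ _ (hSadj v₀ hv₀ c₁ (hmemS v₀ hv₀).2.2.1 hc).symm⟩
        ⟨v₀, hv₀, hafree v₀ (hmemS v₀ hv₀).1⟩
        (fun _ p hp q hq hpq => hGH _ _ (hSadj p hp q hpq (hmemS q hq).2.2.2))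
      have hltf : l.toFinset = S := by
        ext v; rw [List.mem_toFinset]; exact hlmem v
      have hllen : l.length = n - 4 := by
        rw [← List.toFinset_card_of_nodup hlnd, hltf, hScard]
      have hal : a ∉ l := fun h => (hmemS a ((hlmem a).mp h)).1 rfl
      have hbl : b ∉ l := fun h => (hmemS b ((hlmem b).mp h)).2.1 rfl
      have hc₁l : c₁ ∉ l := fun h => (hmemS c₁ ((hlmem c₁).mp h)).2.2.1 rfl
      have hc₂l : c₂ ∉ l := fun h => (hmemS c₂ ((hlmem c₂).mp h)).2.2.2 rfl
      have hbc₂adj : H.Adj b c₂ := hbfree c₂ (fun e => hb2' e.symm)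
      have hLeq : (c₁ :: (l ++ [a])) ++ [b, c₂] = c₁ :: (l ++ [a, b, c₂]) := by
        simp
      have hLch : List.Chain' H.Adj (c₁ :: (l ++ [a, b, c₂])) := by
        rw [← hLeq]
        refine List.IsChain.append hlch ?_ ?_
        · exact List.isChain_pair.mpr hbc₂adj
        · intro x hx y hy
          rw [show c₁ :: (l ++ [a]) = (c₁ :: l) ++ [a] from List.cons_append.symm,
            List.getLast?_concat] at hx
          simp only [Option.mem_some_iff] at hx
          simp only [List.head?_cons, Option.mem_some_iff] at hy
          rw [← hx, ← hy]
          exact (hHadj a b).mpr (Or.inr (Or.inl ⟨rfl, rfl⟩))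
      have hLnd : (c₁ :: (l ++ [a, b, c₂])).Nodup := by
        refine List.nodup_cons.mpr ⟨?_, ?_⟩
        · simp only [List.mem_append, List.mem_cons, List.mem_singleton, List.not_mem_nil,
            or_false]
          rintro (h | h | h | h)
          · exact hc₁l h
          · exact ha1 h.symm
          · exact hb1x h.symm
          · exact hc h
        · rw [List.nodup_append]
          refine ⟨hlnd, ?_, ?_⟩
          · refine List.nodup_cons.mpr ⟨?_, List.nodup_cons.mpr ⟨?_, List.nodup_singleton _⟩⟩
            · simp only [List.mem_cons, List.mem_singleton, List.not_mem_nil, or_false]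
              push_neg
              exact ⟨hab, ha2'⟩
            · simp only [List.mem_singleton]
              exact hb2'
          · intro x hx y hx2
            simp only [List.mem_cons, List.mem_singleton, List.not_mem_nil, or_false] at hx2
            rcases hx2 with rfl | rfl | rfl
            · exact fun e => hal (e ▸ hx)
            · exact fun e => hbl (e ▸ hx)
            · exact fun e => hc₂l (e ▸ hx)
      have hLlen : (c₁ :: (l ++ [a, b, c₂])).length = n := by
        simp only [List.length_cons, List.length_append, List.length_nil]
        omega
      have hend : (c₁ :: (l ++ [a, b, c₂])).getD (n - 1) c₁ = c₂ := by
        rw [show n - 1 = (l.length + 2) + 1 by omega, List.getD_cons_succ,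
          List.getD_append_right l [a, b, c₂] c₁ (l.length + 2) (by omega),
          show l.length + 2 - l.length = 2 by omega]
        rfl
      have hposa : (c₁ :: (l ++ [a, b, c₂])).getD (n - 3) c₁ = a := by
        rw [show n - 3 = l.length + 1 by omega, List.getD_cons_succ,
          List.getD_append_right l [a, b, c₂] c₁ l.length le_rfl, Nat.sub_self,
          List.getD_cons_zero]
      have hposb : (c₁ :: (l ++ [a, b, c₂])).getD (n - 2) c₁ = b := by
        rw [show n - 2 = (l.length + 1) + 1 by omega, List.getD_cons_succ,
          List.getD_append_right l [a, b, c₂] c₁ (l.length + 1) (by omega),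
          show l.length + 1 - l.length = 1 by omega]
        rfl
      refine final_package13 H (c₁ :: (l ++ [a, b, c₂])) c₁ c₂ a b n (n - 2) hLnd hLch
        hLlen rfl hend (by omega) (by omega) (Or.inl ⟨?_, hposb⟩)
      rw [show n - 2 - 1 = n - 3 by omega]
      exact hposa
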